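/- Let Λ be a primitive nondegenerate sublattice of an even unimodular lattice L, let h ∈ Λ ⊗ ℝ be very irrational, and let β ∈ L with β ⊥ h (in L ⊗ ℝ). Then β ∈ Λ^⊥ = {v ∈ L : v·λ = 0 for all λ ∈ Λ}. -/
import Mathlib


/-- Let `Λ` be a primitive nondegenerate sublattice of an even nondegenerate
lattice `L`, let `h ∈ Λ ⊗ ℝ` be very irrational, and let `β ∈ L` with
`β ⊥ h`.  Then `β ∈ Λ^⊥`, i.e. `β` is orthogonal to every element of `Λ`. -/
theorem perp_of_very_irrational {V : Type*} [AddCommGroup V] [Module ℝ V]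
    (B : V →ₗ[ℝ] V →ₗ[ℝ] ℝ) (hsymm : ∀ v w : V, B v w = B w v)
    (L Λ : Submodule ℤ V) (hΛL : Λ ≤ L)
    (heven : ∀ v ∈ L, ∃ k : ℤ, B v v = 2 * k)
    (hint : ∀ v ∈ L, ∀ w ∈ L, ∃ k : ℤ, B v w = k)
    (hLnondeg : ∀ v ∈ L, (∀ w ∈ L, B v w = 0) → v = 0)
    (hΛnondeg : ∀ v ∈ Λ, (∀ w ∈ Λ, B v w = 0) → v = 0)
    (hprim : ∀ (n : ℤ) (x : V), x ∈ L → n • x ∈ Λ → n ≠ 0 → x ∈ Λ)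
    (h : V) (hmem : h ∈ Submodule.span ℝ (Λ : Set V))
    (hirr : ∀ Λ' : Submodule ℤ V, Λ' < Λ →
      (∀ (n : ℤ) (x : V), x ∈ Λ → n • x ∈ Λ' → n ≠ 0 → x ∈ Λ') →
      h ∉ Submodule.span ℝ (Λ' : Set V))
    (β : V) (hβ : β ∈ L) (hβh : B β h = 0) :
    ∀ m ∈ Λ, B β m = 0 := by
  intro m hm
  by_contra hne
  classical
  set f : V →ₗ[ℝ] ℝ := B β with hf
  set Λ' : Submodule ℤ V := Λ ⊓ (LinearMap.ker (f.restrictScalars ℤ)) with hΛ'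
  have hΛ'le : Λ' ≤ Λ := inf_le_left
  have hmΛ' : m ∉ Λ' := fun hmem' => hne hmem'.2
  have hlt : Λ' < Λ := lt_of_le_of_ne hΛ'le (fun heq => hmΛ' (heq ▸ hm))
  have hsat : ∀ (n : ℤ) (x : V), x ∈ Λ → n • x ∈ Λ' → n ≠ 0 → x ∈ Λ' := by
    intro n x hx hnx hn
    refine ⟨hx, ?_⟩
    have h2 : f (n • x) = 0 := hnx.2
    have h3 : (n : ℝ) * f x = 0 := by
      rw [← h2, ← Int.cast_smul_eq_zsmul ℝ n x, map_smul, smul_eq_mul]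
    have : f x = 0 := by
      rcases mul_eq_zero.mp h3 with h4 | h4
      · exact absurd (by exact_mod_cast h4) hn
      · exact h4
    exact this
  obtain ⟨c, hc⟩ := hint β hβ m (hΛL hm)
  have hc0 : (c : ℝ) ≠ 0 := by rw [← hc]; exact hne
  have hker : Submodule.span ℝ (Λ' : Set V) ≤ LinearMap.ker f := by
    rw [Submodule.span_le]
    intro x hx
    exact hx.2
  have hspan : Submodule.span ℝ (Λ : Set V) ≤
      Submodule.span ℝ (Λ' : Set V) ⊔ Submodule.span ℝ {m} := by
    rw [Submodule.span_le]
    intro x hx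
    obtain ⟨k, hk⟩ := hint β hβ x (hΛL hx)
    have hy : (c • x - k • m) ∈ Λ' := by
      refine ⟨Submodule.sub_mem _ (Submodule.smul_mem _ _ hx) (Submodule.smul_mem _ _ hm), ?_⟩
      have : f (c • x - k • m) = 0 := by
        have e1 : f (c • x) = (c : ℝ) * f x := by
          rw [← Int.cast_smul_eq_zsmul ℝ c x, map_smul, smul_eq_mul]
        have e2 : f (k • m) = (k : ℝ) * f m := by
          rw [← Int.cast_smul_eq_zsmul ℝ k m, map_smul, smul_eq_mul]
        rw [map_sub, e1, e2, hk, hc]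
        ring
      exact this
    have hx' : x = ((c : ℝ)⁻¹) • ((c : ℝ) • x - (k : ℝ) • m) + ((k : ℝ) / (c : ℝ)) • m := by
      rw [smul_sub, smul_smul, smul_smul, inv_mul_cancel₀ hc0, one_smul, div_eq_inv_mul]
      abel
    rw [hx']
    refine Submodule.add_mem _ ?_ ?_
    · apply Submodule.mem_sup_left
      apply Submodule.smul_mem
      have : ((c : ℝ) • x - (k : ℝ) • m) = ((c • x - k • m : V)) := by
        rw [← Int.cast_smul_eq_zsmul ℝ c x, ← Int.cast_smul_eq_zsmul ℝ k m]
      rw [this]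
      exact Submodule.subset_span hy
    · exact Submodule.mem_sup_right (Submodule.smul_mem _ _
        (Submodule.subset_span rfl))
  have hh : h ∈ Submodule.span ℝ (Λ' : Set V) ⊔ Submodule.span ℝ {m} := hspan hmem
  rw [Submodule.mem_sup] at hh
  obtain ⟨h', hh', z, hz, hsum⟩ := hh
  rw [Submodule.mem_span_singleton] at hz
  obtain ⟨t, rfl⟩ := hz
  have hfh' : f h' = 0 := hker hh'
  have : t * (c : ℝ) = 0 := by
    have : f h = 0 := hβh
    rw [← hsum, map_add, hfh', map_smul, smul_eq_mul, hc, zero_add] at this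
    exact this
  have ht : t = 0 := by
    rcases mul_eq_zero.mp this with h4 | h4
    · exact h4
    · exact absurd h4 hc0
  have hhmem : h ∈ Submodule.span ℝ (Λ' : Set V) := by
    rw [← hsum, ht, zero_smul, add_zero]; exact hh'
  exact hirr Λ' hlt hsat hhmem
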